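/- A continuous curve f : [0,1] → ℝ² that goes from the left edge to the right edge of a closed rectangle (f(0) on the left edge, f(1) on the right edge, image contained in the rectangle) separates the rectangle: any continuous curve in the rectangle from the bottom edge to the top edge must intersect the image of f. -/

import Mathlib

open Set

lemma ratio_re_pos {u v : ℂ} (hu : u ≠ 0) (h : ‖v - u‖ < ‖u‖) :
    0 < (v / u).re := by
  have hau : 0 < ‖u‖ := norm_pos_iff.mpr hu
  have h1 : v / u = 1 + (v - u) / u := by field_simp; ring
  have h2 : ‖(v - u) / u‖ < 1 := by
    rw [norm_div]; exact (div_lt_one hau).mpr h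
  have h3 : |((v - u) / u).re| ≤ ‖(v - u) / u‖ := Complex.abs_re_le_norm _
  have := abs_le.mp h3
  rw [h1]
  simp only [Complex.add_re, Complex.one_re]
  linarith

lemma arg_sub_arg_int {u v : ℂ} (hu : u ≠ 0) (hv : v ≠ 0) :
    ∃ k : ℤ, (v / u).arg - (v.arg - u.arg) = 2 * Real.pi * k := by
  have hangle : ((v / u).arg : Real.Angle) = ((v.arg - u.arg : ℝ) : Real.Angle) := by
    rw [Complex.arg_div_coe_angle hv hu, Real.Angle.coe_sub]
  exact Real.Angle.angle_eq_iff_two_pi_dvd_sub.mp hangle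

lemma step_eq {u v : ℂ} (hu : u ≠ 0) (hv : v ≠ 0) (hiu : 0 ≤ u.im) (hiv : 0 ≤ v.im)
    (hre : 0 < (v / u).re) : (v / u).arg = v.arg - u.arg := by
  obtain ⟨k, hk⟩ := arg_sub_arg_int hu hv
  have h1 : |(v / u).arg| < Real.pi / 2 := Complex.abs_arg_lt_pi_div_two_iff.mpr (Or.inl hre)
  have h2 : 0 ≤ u.arg := Complex.arg_nonneg_iff.mpr hiu
  have h3 : u.arg ≤ Real.pi := Complex.arg_le_pi u
  have h4 : 0 ≤ v.arg := Complex.arg_nonneg_iff.mpr hiv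
  have h5 : v.arg ≤ Real.pi := Complex.arg_le_pi v
  have h1' := abs_lt.mp h1
  have hpi := Real.pi_pos
  have hk0 : k = 0 := by
    have hlt : (k : ℝ) < 1 := by nlinarith
    have hgt : (-1 : ℝ) < k := by nlinarith
    have : (k : ℤ) < 1 := by exact_mod_cast hlt
    have : (-1 : ℤ) < k := by exact_mod_cast hgt
    omega
  rw [hk0] at hk
  push_cast at hk
  linarith

lemma cell_eq {p q r s : ℂ} (hp : p ≠ 0) (hq : q ≠ 0) (hr : r ≠ 0) (hs : s ≠ 0)
    (h1 : 0 < (q / p).re) (h2 : 0 < (r / q).re) (h3 : 0 < (r / s).re) (h4 : 0 < (s / p).re) :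
    (q / p).arg + (r / q).arg - (r / s).arg - (s / p).arg = 0 := by
  obtain ⟨k1, hk1⟩ := arg_sub_arg_int hp hq
  obtain ⟨k2, hk2⟩ := arg_sub_arg_int hq hr
  obtain ⟨k3, hk3⟩ := arg_sub_arg_int hs hr
  obtain ⟨k4, hk4⟩ := arg_sub_arg_int hp hs
  have b1 := abs_lt.mp (Complex.abs_arg_lt_pi_div_two_iff.mpr (Or.inl h1))
  have b2 := abs_lt.mp (Complex.abs_arg_lt_pi_div_two_iff.mpr (Or.inl h2))
  have b3 := abs_lt.mp (Complex.abs_arg_lt_pi_div_two_iff.mpr (Or.inl h3))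
  have b4 := abs_lt.mp (Complex.abs_arg_lt_pi_div_two_iff.mpr (Or.inl h4))
  have hpi := Real.pi_pos
  have hsum : (q / p).arg + (r / q).arg - (r / s).arg - (s / p).arg
      = 2 * Real.pi * ((k1 : ℝ) + k2 - k3 - k4) := by linarith
  set K : ℤ := k1 + k2 - k3 - k4 with hK
  have hKr : (q / p).arg + (r / q).arg - (r / s).arg - (s / p).arg = 2 * Real.pi * (K : ℝ) := by
    rw [hsum]; push_cast [hK]; ring
  have hK0 : K = 0 := by
    have hlt : (K : ℝ) < 1 := by nlinarith
    have hgt : (-1 : ℝ) < K := by nlinarith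
    have : (K : ℤ) < 1 := by exact_mod_cast hlt
    have : (-1 : ℤ) < K := by exact_mod_cast hgt
    omega
  rw [hKr, hK0]
  simp

lemma quad12_arg_le {z : ℂ} (hre : 0 ≤ z.re) (him : 0 ≤ z.im) :
    z.arg ≤ Real.pi / 2 :=
  Complex.arg_le_pi_div_two_iff.mpr (Or.inl hre)

lemma quad2_arg_ge {z : ℂ} (hz : z ≠ 0) (hre : z.re ≤ 0) (him : 0 ≤ z.im) :
    Real.pi / 2 ≤ z.arg := by
  by_contra hlt
  push_neg at hlt
  rcases Complex.arg_lt_pi_div_two_iff.mp hlt with h | h | h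
  · linarith
  · linarith
  · exact hz h


/-- Crossing-paths (Hex) theorem in a rectangle: a continuous curve in the
rectangle from the left edge to the right edge meets every continuous curve in
the rectangle from the bottom edge to the top edge. -/
theorem crossing_paths_in_rectangle (a b c d : ℝ) (hab : a ≤ b) (hcd : c ≤ d)
    (f g : ℝ → ℝ × ℝ)
    (hf : ContinuousOn f (Icc 0 1)) (hg : ContinuousOn g (Icc 0 1))
    (hfR : ∀ t ∈ Icc (0:ℝ) 1, f t ∈ Icc a b ×ˢ Icc c d)
    (hgR : ∀ t ∈ Icc (0:ℝ) 1, g t ∈ Icc a b ×ˢ Icc c d)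
    (hf0 : (f 0).1 = a) (hf1 : (f 1).1 = b)
    (hg0 : (g 0).2 = c) (hg1 : (g 1).2 = d) :
    ∃ s ∈ Icc (0:ℝ) 1, ∃ t ∈ Icc (0:ℝ) 1, f s = g t := by
  by_contra hcon
  push_neg at hcon
  -- the difference map, as a complex-valued function
  set F : ℝ × ℝ → ℂ :=
    fun p => (((f p.1).1 - (g p.2).1 : ℝ) : ℂ) + (((f p.1).2 - (g p.2).2 : ℝ) : ℂ) * Complex.I
    with hFdef
  have hFre : ∀ p : ℝ × ℝ, (F p).re = (f p.1).1 - (g p.2).1 := by intro p; simp [hFdef]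
  have hFim : ∀ p : ℝ × ℝ, (F p).im = (f p.1).2 - (g p.2).2 := by intro p; simp [hFdef]
  set K : Set (ℝ × ℝ) := Icc (0:ℝ) 1 ×ˢ Icc (0:ℝ) 1 with hKdef
  have hKc : IsCompact K := isCompact_Icc.prod isCompact_Icc
  have hmemK : ∀ p : ℝ × ℝ, p ∈ K → p.1 ∈ Icc (0:ℝ) 1 ∧ p.2 ∈ Icc (0:ℝ) 1 := by
    intro p hp; exact ⟨hp.1, hp.2⟩
  -- continuity
  have hf1c : ContinuousOn (fun p : ℝ × ℝ => f p.1) K :=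
    hf.comp continuousOn_fst (fun p hp => hp.1)
  have hg2c : ContinuousOn (fun p : ℝ × ℝ => g p.2) K :=
    hg.comp continuousOn_snd (fun p hp => hp.2)
  have hFc : ContinuousOn F K := by
    apply ContinuousOn.add
    · exact Complex.continuous_ofReal.comp_continuousOn
        ((hf1c.fst).sub (hg2c.fst))
    · exact (Complex.continuous_ofReal.comp_continuousOn
        ((hf1c.snd).sub (hg2c.snd))).mul continuousOn_const
  -- nonvanishing
  have hF0 : ∀ p ∈ K, F p ≠ 0 := by
    intro p hp h0
    have h1 : (F p).re = 0 := by rw [h0]; simp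
    have h2 : (F p).im = 0 := by rw [h0]; simp
    rw [hFre] at h1; rw [hFim] at h2
    exact hcon p.1 (hmemK p hp).1 p.2 (hmemK p hp).2 (Prod.ext (by linarith) (by linarith))
  -- minimum of |F| on K
  obtain ⟨p₀, hp₀K, hp₀min⟩ := hKc.exists_isMinOn
    ⟨(0, 0), by constructor <;> exact ⟨le_refl _, zero_le_one⟩⟩
    (continuous_norm.comp_continuousOn hFc)
  set ε : ℝ := ‖F p₀‖ with hεdef
  have hε : 0 < ε := norm_pos_iff.mpr (hF0 p₀ hp₀K)
  have hεle : ∀ p ∈ K, ε ≤ ‖F p‖ := fun p hp => hp₀min hp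
  -- uniform continuity
  have hUC := hKc.uniformContinuousOn_of_continuous hFc
  rw [Metric.uniformContinuousOn_iff] at hUC
  obtain ⟨δ, hδ, hδ'⟩ := hUC ε hε
  obtain ⟨n, hn⟩ := exists_nat_one_div_lt hδ
  set N : ℕ := n + 1 with hNdef
  have hN : 0 < N := Nat.succ_pos n
  have hNR : (0:ℝ) < N := by exact_mod_cast hN
  have hstepδ : (1:ℝ) / N < δ := by rw [hNdef]; push_cast; exact hn
  -- the grid
  set z : ℕ → ℕ → ℂ := fun i j => F ((i : ℝ) / N, (j : ℝ) / N) with hzdef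
  have hmem : ∀ i ≤ N, ∀ j ≤ N, ((i : ℝ) / N, (j : ℝ) / N) ∈ K := by
    intro i hi j hj
    constructor
    · exact ⟨by positivity, by rw [div_le_one hNR]; exact_mod_cast hi⟩
    · exact ⟨by positivity, by rw [div_le_one hNR]; exact_mod_cast hj⟩
  have hz0 : ∀ i ≤ N, ∀ j ≤ N, z i j ≠ 0 := fun i hi j hj => hF0 _ (hmem i hi j hj)
  have hzε : ∀ i ≤ N, ∀ j ≤ N, ε ≤ ‖z i j‖ := fun i hi j hj =>
    hεle _ (hmem i hi j hj)
  -- neighboring grid values are close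
  have hclose : ∀ i ≤ N, ∀ j ≤ N, ∀ i' ≤ N, ∀ j' ≤ N,
      dist ((i:ℝ)/N) ((i':ℝ)/N) < δ → dist ((j:ℝ)/N) ((j':ℝ)/N) < δ →
      ‖z i j - z i' j'‖ < ε := by
    intro i hi j hj i' hi' j' hj' h1 h2
    have := hδ' _ (hmem i hi j hj) _ (hmem i' hi' j' hj') (by
      rw [Prod.dist_eq]; exact max_lt h1 h2)
    rwa [Complex.dist_eq] at this
  have hdist1 : ∀ i : ℕ, dist (((i+1:ℕ):ℝ)/N) ((i:ℝ)/N) < δ := by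
    intro i
    have : (((i+1:ℕ):ℝ)/N) - ((i:ℝ)/N) = 1 / N := by push_cast; ring
    rw [Real.dist_eq, this, abs_of_pos (by positivity)]
    exact hstepδ
  have hdist0 : ∀ i : ℕ, dist ((i:ℝ)/N) ((i:ℝ)/N) < δ := by
    intro i; rw [dist_self]; exact hδ
  have hcloseH : ∀ i < N, ∀ j ≤ N, ‖z (i+1) j - z i j‖ < ε := by
    intro i hi j hj
    exact hclose (i+1) hi j hj i (le_of_lt hi) j hj (hdist1 i) (hdist0 j)
  have hcloseV : ∀ i ≤ N, ∀ j < N, ‖z i (j+1) - z i j‖ < ε := by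
    intro i hi j hj
    exact hclose i hi (j+1) hj i hi j (le_of_lt hj) (hdist0 i) (hdist1 j)
  -- ratio positivity for neighbors
  have hreH : ∀ i < N, ∀ j ≤ N, 0 < (z (i+1) j / z i j).re := by
    intro i hi j hj
    exact ratio_re_pos (hz0 i (le_of_lt hi) j hj)
      (lt_of_lt_of_le (hcloseH i hi j hj) (hzε i (le_of_lt hi) j hj))
  have hreV : ∀ i ≤ N, ∀ j < N, 0 < (z i (j+1) / z i j).re := by
    intro i hi j hj
    exact ratio_re_pos (hz0 i hi j (le_of_lt hj))
      (lt_of_lt_of_le (hcloseV i hi j hj) (hzε i hi j (le_of_lt hj)))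
  -- step functions
  set hd : ℕ → ℕ → ℝ := fun i j => (z (i+1) j / z i j).arg with hhd
  set vd : ℕ → ℕ → ℝ := fun i j => (z i (j+1) / z i j).arg with hvd
  -- each cell contributes zero
  have hcell : ∀ i < N, ∀ j < N, hd i j + vd (i+1) j - hd i (j+1) - vd i j = 0 := by
    intro i hi j hj
    have hi' : i ≤ N := le_of_lt hi
    have hj' : j ≤ N := le_of_lt hj
    have hi1 : i + 1 ≤ N := hi
    have hj1 : j + 1 ≤ N := hj
    exact cell_eq (hz0 i hi' j hj') (hz0 (i+1) hi1 j hj') (hz0 (i+1) hi1 (j+1) hj1)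
      (hz0 i hi' (j+1) hj1) (hreH i hi j hj') (hreV (i+1) hi1 j hj)
      (hreH i hi (j+1) hj1) (hreV i hi' j hj)
  -- total boundary sum is zero
  have hbd : (∑ i ∈ Finset.range N, hd i 0) - (∑ i ∈ Finset.range N, hd i N)
      + ((∑ j ∈ Finset.range N, vd N j) - (∑ j ∈ Finset.range N, vd 0 j)) = 0 := by
    have h1 : ∑ i ∈ Finset.range N, ∑ j ∈ Finset.range N,
        (hd i j + vd (i+1) j - hd i (j+1) - vd i j) = 0 :=
      Finset.sum_eq_zero fun i hi => Finset.sum_eq_zero fun j hj =>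
        hcell i (Finset.mem_range.mp hi) j (Finset.mem_range.mp hj)
    have h2 : ∀ i ∈ Finset.range N, ∑ j ∈ Finset.range N, (hd i j - hd i (j+1))
        = hd i 0 - hd i N := by
      intro i _
      exact Finset.sum_range_sub' (fun j => hd i j) N
    have h3 : ∀ j ∈ Finset.range N, ∑ i ∈ Finset.range N, (vd (i+1) j - vd i j)
        = vd N j - vd 0 j := by
      intro j _
      exact Finset.sum_range_sub (fun i => vd i j) N
    calc (∑ i ∈ Finset.range N, hd i 0) - (∑ i ∈ Finset.range N, hd i N)
          + ((∑ j ∈ Finset.range N, vd N j) - (∑ j ∈ Finset.range N, vd 0 j))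
        = (∑ i ∈ Finset.range N, (hd i 0 - hd i N))
          + (∑ j ∈ Finset.range N, (vd N j - vd 0 j)) := by
          rw [Finset.sum_sub_distrib, Finset.sum_sub_distrib]
      _ = (∑ i ∈ Finset.range N, ∑ j ∈ Finset.range N, (hd i j - hd i (j+1)))
          + (∑ j ∈ Finset.range N, ∑ i ∈ Finset.range N, (vd (i+1) j - vd i j)) := by
          rw [Finset.sum_congr rfl h2, Finset.sum_congr rfl h3]
      _ = ∑ i ∈ Finset.range N, ∑ j ∈ Finset.range N,
            ((hd i j - hd i (j+1)) + (vd (i+1) j - vd i j)) := by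
          have hswap : ∑ j ∈ Finset.range N, ∑ i ∈ Finset.range N, (vd (i+1) j - vd i j)
              = ∑ i ∈ Finset.range N, ∑ j ∈ Finset.range N, (vd (i+1) j - vd i j) :=
            Finset.sum_comm
          rw [hswap, ← Finset.sum_add_distrib]
          exact Finset.sum_congr rfl fun i _ => (Finset.sum_add_distrib).symm
      _ = ∑ i ∈ Finset.range N, ∑ j ∈ Finset.range N,
            (hd i j + vd (i+1) j - hd i (j+1) - vd i j) := by
          congr 1; ext i; congr 1; ext j; ring
      _ = 0 := h1
  -- edge sign conditions
  have hmemI : ∀ i ≤ N, (i:ℝ)/N ∈ Icc (0:ℝ) 1 := fun i hi =>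
    ⟨by positivity, by rw [div_le_one hNR]; exact_mod_cast hi⟩
  have h0N : ((0:ℕ):ℝ)/N = 0 := by simp
  have hNN : ((N:ℕ):ℝ)/N = 1 := by field_simp
  have himBot : ∀ i ≤ N, 0 ≤ (z i 0).im := by
    intro i hi
    have h : (z i 0).im = (f ((i:ℝ)/N)).2 - (g (((0:ℕ):ℝ)/N)).2 := hFim _
    rw [h, h0N, hg0]
    have := (hfR _ (hmemI i hi)).2.1
    linarith
  have himTop : ∀ i ≤ N, (z i N).im ≤ 0 := by
    intro i hi
    have h : (z i N).im = (f ((i:ℝ)/N)).2 - (g (((N:ℕ):ℝ)/N)).2 := hFim _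
    rw [h, hNN, hg1]
    have := (hfR _ (hmemI i hi)).2.2
    linarith
  have hreRight : ∀ j ≤ N, 0 ≤ (z N j).re := by
    intro j hj
    have h : (z N j).re = (f (((N:ℕ):ℝ)/N)).1 - (g ((j:ℝ)/N)).1 := hFre _
    rw [h, hNN, hf1]
    have := (hgR _ (hmemI j hj)).1.2
    linarith
  have hreLeft : ∀ j ≤ N, (z 0 j).re ≤ 0 := by
    intro j hj
    have h : (z 0 j).re = (f (((0:ℕ):ℝ)/N)).1 - (g ((j:ℝ)/N)).1 := hFre _
    rw [h, h0N, hf0]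
    have := (hgR _ (hmemI j hj)).1.1
    linarith
  -- telescoping of the four boundary sums
  have hbot : ∑ i ∈ Finset.range N, hd i 0 = (z N 0).arg - (z 0 0).arg := by
    have hc : ∀ i ∈ Finset.range N, hd i 0 = (z (i+1) 0).arg - (z i 0).arg := by
      intro i hi
      have hi' := Finset.mem_range.mp hi
      exact step_eq (hz0 i (le_of_lt hi') 0 (Nat.zero_le N)) (hz0 (i+1) hi' 0 (Nat.zero_le N))
        (himBot i (le_of_lt hi')) (himBot (i+1) hi') (hreH i hi' 0 (Nat.zero_le N))
    rw [Finset.sum_congr rfl hc, Finset.sum_range_sub (fun i => (z i 0).arg)]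
  have htop : ∑ i ∈ Finset.range N, hd i N = (-(z N N)).arg - (-(z 0 N)).arg := by
    have hc : ∀ i ∈ Finset.range N, hd i N = (-(z (i+1) N)).arg - (-(z i N)).arg := by
      intro i hi
      have hi' := Finset.mem_range.mp hi
      have hrw : z (i+1) N / z i N = -(z (i+1) N) / -(z i N) := (neg_div_neg_eq _ _).symm
      have : hd i N = (-(z (i+1) N) / -(z i N)).arg := by
        show (z (i+1) N / z i N).arg = _
        rw [hrw]
      rw [this]
      apply step_eq (neg_ne_zero.mpr (hz0 i (le_of_lt hi') N le_rfl))
        (neg_ne_zero.mpr (hz0 (i+1) hi' N le_rfl))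
      · rw [Complex.neg_im]; linarith [himTop i (le_of_lt hi')]
      · rw [Complex.neg_im]; linarith [himTop (i+1) hi']
      · rw [← hrw]; exact hreH i hi' N le_rfl
    rw [Finset.sum_congr rfl hc, Finset.sum_range_sub (fun i => (-(z i N)).arg)]
  have hIim : ∀ w : ℂ, (Complex.I * w).im = w.re := by
    intro w; simp [Complex.mul_im]
  have hIre : ∀ w : ℂ, (Complex.I * w).re = -w.im := by
    intro w; simp [Complex.mul_re]
  have hnIim : ∀ w : ℂ, (-Complex.I * w).im = -w.re := by
    intro w; simp [Complex.mul_im]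
  have hnIre : ∀ w : ℂ, (-Complex.I * w).re = w.im := by
    intro w; simp [Complex.mul_re]
  have hright : ∑ j ∈ Finset.range N, vd N j
      = (Complex.I * z N N).arg - (Complex.I * z N 0).arg := by
    have hc : ∀ j ∈ Finset.range N, vd N j
        = (Complex.I * z N (j+1)).arg - (Complex.I * z N j).arg := by
      intro j hj
      have hj' := Finset.mem_range.mp hj
      have hrw : z N (j+1) / z N j = (Complex.I * z N (j+1)) / (Complex.I * z N j) :=
        (mul_div_mul_left _ _ Complex.I_ne_zero).symm
      have : vd N j = ((Complex.I * z N (j+1)) / (Complex.I * z N j)).arg := by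
        show (z N (j+1) / z N j).arg = _
        rw [hrw]
      rw [this]
      apply step_eq (mul_ne_zero Complex.I_ne_zero (hz0 N le_rfl j (le_of_lt hj')))
        (mul_ne_zero Complex.I_ne_zero (hz0 N le_rfl (j+1) hj'))
      · rw [hIim]; exact hreRight j (le_of_lt hj')
      · rw [hIim]; exact hreRight (j+1) hj'
      · rw [← hrw]; exact hreV N le_rfl j hj'
    rw [Finset.sum_congr rfl hc, Finset.sum_range_sub (fun j => (Complex.I * z N j).arg)]
  have hleft : ∑ j ∈ Finset.range N, vd 0 j
      = (-Complex.I * z 0 N).arg - (-Complex.I * z 0 0).arg := by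
    have hc : ∀ j ∈ Finset.range N, vd 0 j
        = (-Complex.I * z 0 (j+1)).arg - (-Complex.I * z 0 j).arg := by
      intro j hj
      have hj' := Finset.mem_range.mp hj
      have hnI : (-Complex.I : ℂ) ≠ 0 := neg_ne_zero.mpr Complex.I_ne_zero
      have hrw : z 0 (j+1) / z 0 j = (-Complex.I * z 0 (j+1)) / (-Complex.I * z 0 j) :=
        (mul_div_mul_left _ _ hnI).symm
      have : vd 0 j = ((-Complex.I * z 0 (j+1)) / (-Complex.I * z 0 j)).arg := by
        show (z 0 (j+1) / z 0 j).arg = _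
        rw [hrw]
      rw [this]
      apply step_eq (mul_ne_zero hnI (hz0 0 (Nat.zero_le N) j (le_of_lt hj')))
        (mul_ne_zero hnI (hz0 0 (Nat.zero_le N) (j+1) hj'))
      · rw [hnIim]; linarith [hreLeft j (le_of_lt hj')]
      · rw [hnIim]; linarith [hreLeft (j+1) hj']
      · rw [← hrw]; exact hreV 0 (Nat.zero_le N) j hj'
    rw [Finset.sum_congr rfl hc, Finset.sum_range_sub (fun j => (-Complex.I * z 0 j).arg)]
  rw [hbot, htop, hright, hleft] at hbd
  -- quadrant bounds at the four corners
  have hz00 := hz0 0 (Nat.zero_le N) 0 (Nat.zero_le N)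
  have hzN0 := hz0 N le_rfl 0 (Nat.zero_le N)
  have hzNN := hz0 N le_rfl N le_rfl
  have hz0N := hz0 0 (Nat.zero_le N) N le_rfl
  have A1 : (z N 0).arg ≤ Real.pi / 2 :=
    quad12_arg_le (hreRight 0 (Nat.zero_le N)) (himBot N le_rfl)
  have A3 : Real.pi / 2 ≤ (z 0 0).arg :=
    quad2_arg_ge hz00 (hreLeft 0 (Nat.zero_le N)) (himBot 0 (Nat.zero_le N))
  have B1 : Real.pi / 2 ≤ (-(z N N)).arg := by
    apply quad2_arg_ge (neg_ne_zero.mpr hzNN)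
    · rw [Complex.neg_re]; linarith [hreRight N le_rfl]
    · rw [Complex.neg_im]; linarith [himTop N le_rfl]
  have B2 : (-(z 0 N)).arg ≤ Real.pi / 2 := by
    apply quad12_arg_le
    · rw [Complex.neg_re]; linarith [hreLeft N le_rfl]
    · rw [Complex.neg_im]; linarith [himTop 0 (Nat.zero_le N)]
  have R1 : (Complex.I * z N N).arg ≤ Real.pi / 2 := by
    apply quad12_arg_le
    · rw [hIre]; linarith [himTop N le_rfl]
    · rw [hIim]; exact hreRight N le_rfl
  have R2 : Real.pi / 2 ≤ (Complex.I * z N 0).arg := by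
    apply quad2_arg_ge (mul_ne_zero Complex.I_ne_zero hzN0)
    · rw [hIre]; linarith [himBot N le_rfl]
    · rw [hIim]; exact hreRight 0 (Nat.zero_le N)
  have L1 : Real.pi / 2 ≤ (-Complex.I * z 0 N).arg := by
    apply quad2_arg_ge (mul_ne_zero (neg_ne_zero.mpr Complex.I_ne_zero) hz0N)
    · rw [hnIre]; exact himTop 0 (Nat.zero_le N)
    · rw [hnIim]; linarith [hreLeft N le_rfl]
  have L2 : (-Complex.I * z 0 0).arg ≤ Real.pi / 2 := by
    apply quad12_arg_le
    · rw [hnIre]; exact himBot 0 (Nat.zero_le N)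
    · rw [hnIim]; linarith [hreLeft 0 (Nat.zero_le N)]
  -- all four boundary contributions are nonpositive and sum to zero
  have hA0 : (z N 0).arg - (z 0 0).arg = 0 := by linarith
  have hR0 : (Complex.I * z N N).arg - (Complex.I * z N 0).arg = 0 := by linarith
  have hargN0 : (z N 0).arg = Real.pi / 2 := by linarith
  have hargIN0 : (Complex.I * z N 0).arg = Real.pi / 2 := by linarith
  have hc1 := Complex.arg_eq_pi_div_two_iff.mp hargN0
  have hc2 := Complex.arg_eq_pi_div_two_iff.mp hargIN0
  rw [hIim] at hc2
  linarith [hc1.1, hc2.2]
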